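/- Let E = EuclideanSpace ℝ (Fin n), let μ > 0 be a real number, let K : E →L[ℝ] E be a symmetric continuous linear map (⟨K ζ, η⟩ = ⟨ζ, K η⟩ for all ζ, η ∈ E), and let 𝒫₁, 𝒫₂ : E → ℝ and u₁, u₂ : E → E satisfy: 𝒫₁, 𝒫₂ are differentiable on E, u₁, u₂ are differentiable at a point x ∈ E, uᵢ(y) = −(1/μ) • K(grad 𝒫ᵢ(y)) for all y ∈ E and i = 1, 2, and div u₁(x) = div u₂(x) = 0. Then the reciprocity identity div(𝒫₁ • u₂)(x) = div(𝒫₂ • u₁)(x) holds, where div v(x) = ∑ᵢ ⟨(fderiv ℝ v x)(eᵢ), eᵢ⟩ is the trace of the Fréchet derivative and (eᵢ) the standard orthonormal basis. -/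

import Mathlib

open scoped RealInnerProductSpace

lemma klinkenberg_div_smul_eq {n : ℕ} (P : EuclideanSpace ℝ (Fin n) → ℝ)
    (u : EuclideanSpace ℝ (Fin n) → EuclideanSpace ℝ (Fin n))
    (x : EuclideanSpace ℝ (Fin n))
    (hP : DifferentiableAt ℝ P x) (hu : DifferentiableAt ℝ u x)
    (hdiv : ∑ i : Fin n, ⟪fderiv ℝ u x (EuclideanSpace.single i (1 : ℝ)),
        EuclideanSpace.single i (1 : ℝ)⟫ = 0) :
    ∑ i : Fin n, ⟪fderiv ℝ (fun y => P y • u y) x (EuclideanSpace.single i (1 : ℝ)),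
        EuclideanSpace.single i (1 : ℝ)⟫ = ⟪gradient P x, u x⟫ := by
  have hfd : ∀ v, fderiv ℝ (fun y => P y • u y) x v
      = P x • fderiv ℝ u x v + (fderiv ℝ P x v) • u x := by
    intro v
    rw [fderiv_fun_smul hP hu]
    simp
  calc ∑ i : Fin n, ⟪fderiv ℝ (fun y => P y • u y) x (EuclideanSpace.single i (1 : ℝ)),
        EuclideanSpace.single i (1 : ℝ)⟫
      = ∑ i : Fin n, (P x * ⟪fderiv ℝ u x (EuclideanSpace.single i (1 : ℝ)),
          EuclideanSpace.single i (1 : ℝ)⟫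
        + (fderiv ℝ P x (EuclideanSpace.single i (1 : ℝ))) *
            ⟪u x, EuclideanSpace.single i (1 : ℝ)⟫) := by
        refine Finset.sum_congr rfl fun i _ => ?_
        rw [hfd]
        rw [inner_add_left, real_inner_smul_left, real_inner_smul_left]
    _ = ⟪gradient P x, u x⟫ := by
        rw [Finset.sum_add_distrib, ← Finset.mul_sum, hdiv, mul_zero, zero_add]
        have hg : ∀ v, fderiv ℝ P x v = ⟪gradient P x, v⟫ := fun v => by
          rw [gradient, InnerProductSpace.toDual_symm_apply]
        simp only [hg, EuclideanSpace.inner_single_right]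
        simp [PiLp.inner_apply, mul_comm]
        rw [hg, PiLp.inner_apply]
        simp [mul_comm]

/-- Pointwise Betti-type reciprocity for the Hopf–Cole–transformed Klinkenberg (linear
Darcy) model: for two solution states `(𝒫₁, u₁)`, `(𝒫₂, u₂)` with `uᵢ = −(1/μ) K grad 𝒫ᵢ`,
symmetric permeability `K`, and `div u₁ x = div u₂ x = 0`, one has
`div (𝒫₁ • u₂) x = div (𝒫₂ • u₁) x`. -/
theorem klinkenberg_betti_reciprocity {n : ℕ} (μ : ℝ) (hμ : 0 < μ)
    (K : EuclideanSpace ℝ (Fin n) →L[ℝ] EuclideanSpace ℝ (Fin n))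
    (hKsymm : ∀ ζ η : EuclideanSpace ℝ (Fin n), ⟪K ζ, η⟫ = ⟪ζ, K η⟫)
    (P₁ P₂ : EuclideanSpace ℝ (Fin n) → ℝ)
    (u₁ u₂ : EuclideanSpace ℝ (Fin n) → EuclideanSpace ℝ (Fin n))
    (hP₁ : Differentiable ℝ P₁) (hP₂ : Differentiable ℝ P₂)
    (x : EuclideanSpace ℝ (Fin n))
    (hu₁ : DifferentiableAt ℝ u₁ x) (hu₂ : DifferentiableAt ℝ u₂ x)
    (hdarcy₁ : ∀ y, u₁ y = -(1 / μ) • K (gradient P₁ y))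
    (hdarcy₂ : ∀ y, u₂ y = -(1 / μ) • K (gradient P₂ y))
    (hdiv₁ : ∑ i : Fin n, ⟪fderiv ℝ u₁ x (EuclideanSpace.single i (1 : ℝ)),
        EuclideanSpace.single i (1 : ℝ)⟫ = 0)
    (hdiv₂ : ∑ i : Fin n, ⟪fderiv ℝ u₂ x (EuclideanSpace.single i (1 : ℝ)),
        EuclideanSpace.single i (1 : ℝ)⟫ = 0) :
    ∑ i : Fin n, ⟪fderiv ℝ (fun y => P₁ y • u₂ y) x (EuclideanSpace.single i (1 : ℝ)),
        EuclideanSpace.single i (1 : ℝ)⟫ =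
      ∑ i : Fin n, ⟪fderiv ℝ (fun y => P₂ y • u₁ y) x (EuclideanSpace.single i (1 : ℝ)),
        EuclideanSpace.single i (1 : ℝ)⟫ := by
  rw [klinkenberg_div_smul_eq P₁ u₂ x (hP₁ x) hu₂ hdiv₂,
      klinkenberg_div_smul_eq P₂ u₁ x (hP₂ x) hu₁ hdiv₁,
      hdarcy₁ x, hdarcy₂ x, real_inner_smul_right, real_inner_smul_right]
  congr 1
  rw [← hKsymm, real_inner_comm]
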